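/- Let (B, ⊑) be an ordered functor on Set which preserves weak pullbacks and has a cofree comonad B^∞, and let f : X → BX, g : Y → BY be B-coalgebras and h : X → Y a function. (i) If (Bh ∘ f)(x) ⊑_{BY} (g ∘ h)(x) for all x ∈ X, then (B^∞h ∘ f^∞)(x) ≲_{B^∞Y} (g^∞ ∘ h)(x) for all x ∈ X. (ii) Conversely, if (g ∘ h)(x) ⊑_{BY} (Bh ∘ f)(x) for all x ∈ X, then (g^∞ ∘ h)(x) ≲_{B^∞Y} (B^∞h ∘ f^∞)(x) for all x ∈ X. -/

import Mathlib

/-- A `Set`-endofunctor, presented concretely. -/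
structure SetFunctor where
  obj : Type → Type
  map : {X Y : Type} → (X → Y) → obj X → obj Y
  map_id : ∀ {X : Type}, map (id : X → X) = id
  map_comp : ∀ {X Y Z : Type} (f : X → Y) (g : Y → Z), map (g ∘ f) = map g ∘ map f

/-- An ordered functor: a `Set`-functor together with a preorder on each `B X`,
such that `B f` is monotone for every `f`. -/
structure OrderedFunctor extends SetFunctor where
  le : {X : Type} → obj X → obj X → Prop
  le_refl : ∀ {X : Type} (b : obj X), le b b
  le_trans : ∀ {X : Type} {a b c : obj X}, le a b → le b c → le a c
  map_mono : ∀ {X Y : Type} (f : X → Y) {b c : obj X}, le b c → le (map f b) (map f c)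

/-- The canonical relation lifting of a `Set`-functor. -/
def SetFunctor.relLift (B : SetFunctor) {X Y : Type} (R : X → Y → Prop)
    (b : B.obj X) (c : B.obj Y) : Prop :=
  ∃ d : B.obj {p : X × Y // R p.1 p.2},
    B.map (fun p => p.1.1) d = b ∧ B.map (fun p => p.1.2) d = c

/-- The lax relation lifting `⊑ ∘ Rel(B)(R) ∘ ⊑` of an ordered functor. -/
def OrderedFunctor.laxRelLift (B : OrderedFunctor) {X Y : Type} (R : X → Y → Prop)
    (b : B.obj X) (c : B.obj Y) : Prop :=
  ∃ b' c', B.le b b' ∧ B.toSetFunctor.relLift R b' c' ∧ B.le c' c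

/-- `R` is a simulation between coalgebras `f` and `g`. -/
def OrderedFunctor.IsSimulation (B : OrderedFunctor) {X Y : Type}
    (f : X → B.obj X) (g : Y → B.obj Y) (R : X → Y → Prop) : Prop :=
  ∀ x y, R x y → B.laxRelLift R (f x) (g y)

/-- Similarity: the greatest simulation (union of all simulations). -/
def OrderedFunctor.Sim (B : OrderedFunctor) {X Y : Type}
    (f : X → B.obj X) (g : Y → B.obj Y) (x : X) (y : Y) : Prop :=
  ∃ R, B.IsSimulation f g R ∧ R x y

/-- The ordered functor `B(-) × Z`, with `(b,z) ⊑̃ (c,z') iff b ⊑ c ∧ z = z'`. -/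
def OrderedFunctor.prodConst (B : OrderedFunctor) (Z : Type) : OrderedFunctor where
  obj X := B.obj X × Z
  map f p := (B.map f p.1, p.2)
  map_id := by intro X; funext p; simp [SetFunctor.map_id]
  map_comp := by intro X Y Z' f g; funext p; simp [SetFunctor.map_comp]
  le p q := B.le p.1 q.1 ∧ p.2 = q.2
  le_refl := by intro X p; exact ⟨B.le_refl _, rfl⟩
  le_trans := by intro X a b c h1 h2; exact ⟨B.le_trans h1.1 h2.1, h1.2.trans h2.2⟩
  map_mono := by intro X Y f b c h; exact ⟨B.map_mono f h.1, h.2⟩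

/-- `h` is a `B`-coalgebra homomorphism from `(X, f)` to `(Y, g)`. -/
def IsCoalgHom (B : SetFunctor) {X Y : Type} (f : X → B.obj X) (g : Y → B.obj Y)
    (h : X → Y) : Prop :=
  ∀ x, B.map h (f x) = g (h x)

/-- A cofree comonad for `B`: for every `X`, `⟨θ_X, ε_X⟩ : B^∞X → B(B^∞X) × X` is a
final coalgebra for `B(-) × X`; `ext f p` is the unique mediating homomorphism. -/
structure Cofree (B : SetFunctor) where
  obj : Type → Type
  θ : {X : Type} → obj X → B.obj (obj X)
  ε : {X : Type} → obj X → X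
  ext : {X C : Type} → (C → B.obj C) → (C → X) → C → obj X
  θ_ext : ∀ {X C : Type} (f : C → B.obj C) (p : C → X) (c : C),
    θ (ext f p c) = B.map (ext f p) (f c)
  ε_ext : ∀ {X C : Type} (f : C → B.obj C) (p : C → X) (c : C),
    ε (ext f p c) = p c
  ext_unique : ∀ {X C : Type} (f : C → B.obj C) (p : C → X) (h : C → obj X),
    (∀ c, θ (h c) = B.map h (f c)) → (∀ c, ε (h c) = p c) → h = ext f p

/-- The functorial action of the cofree comonad `B^∞`. -/
def Cofree.cmap {B : SetFunctor} (W : Cofree B) {X Y : Type} (h : X → Y) :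
    W.obj X → W.obj Y :=
  W.ext W.θ (h ∘ W.ε)

/-- The coinductive extension `f^∞ : X → B^∞X` of a coalgebra `f : X → BX`. -/
def Cofree.coext {B : SetFunctor} (W : Cofree B) {X : Type} (f : X → B.obj X) :
    X → W.obj X :=
  W.ext f id

/-- The comultiplication `δ : B^∞ ⇒ B^∞B^∞` of the cofree comonad. -/
def Cofree.δ {B : SetFunctor} (W : Cofree B) {X : Type} : W.obj X → W.obj (W.obj X) :=
  W.ext W.θ id

/-- The similarity order `≲_{B^∞X}` on the cofree coalgebra `B^∞X`: similarity of
`⟨θ_X, ε_X⟩` with itself for the ordered functor `B(-) × X`. -/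
def cofreeSim (B : OrderedFunctor) (W : Cofree B.toSetFunctor) (X : Type) :
    W.obj X → W.obj X → Prop :=
  (B.prodConst X).Sim (fun w => (W.θ w, W.ε w)) (fun w => (W.θ w, W.ε w))

/-- A free monad for `Σ`: `[ι_X, η_X] : Σ(Σ*X) + X → Σ*X` is an initial algebra
for `Σ(-) + X`, with `fold` the unique mediating algebra homomorphism, and
(by Lambek's lemma) `[ι_X, η_X]` is an isomorphism with inverse `dest`. -/
structure FreeMonad (S : SetFunctor) where
  obj : Type → Type
  η : {X : Type} → X → obj X
  ι : {X : Type} → S.obj (obj X) → obj X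
  fold : {X A : Type} → (S.obj A → A) → (X → A) → obj X → A
  fold_ι : ∀ {X A : Type} (a : S.obj A → A) (h : X → A) (t : S.obj (obj X)),
    fold a h (ι t) = a (S.map (fold a h) t)
  fold_η : ∀ {X A : Type} (a : S.obj A → A) (h : X → A) (x : X),
    fold a h (η x) = h x
  fold_unique : ∀ {X A : Type} (a : S.obj A → A) (h : X → A) (k : obj X → A),
    (∀ t, k (ι t) = a (S.map k t)) → (∀ x, k (η x) = h x) → k = fold a h
  dest : {X : Type} → obj X → S.obj (obj X) ⊕ X
  dest_ι : ∀ {X : Type} (t : S.obj (obj X)), dest (ι t) = Sum.inl t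
  dest_η : ∀ {X : Type} (x : X), dest (η x) = Sum.inr x
  elim_dest : ∀ {X : Type} (t : obj X), Sum.elim ι η (dest t) = t

/-- The functorial action of the free monad `Σ*`. -/
def FreeMonad.mmap {S : SetFunctor} (M : FreeMonad S) {X Y : Type} (h : X → Y) :
    M.obj X → M.obj Y :=
  M.fold M.ι (M.η ∘ h)

/-- The multiplication `μ : Σ*Σ* ⇒ Σ*` of the free monad. -/
def FreeMonad.μ {S : SetFunctor} (M : FreeMonad S) {X : Type} :
    M.obj (M.obj X) → M.obj X :=
  M.fold M.ι id

/-- A biGSOS specification: a natural transformation `ρ : ΣB^∞ ⇒ BΣ*`. -/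
structure BiGSOS (S : SetFunctor) (B : OrderedFunctor) (W : Cofree B.toSetFunctor)
    (M : FreeMonad S) where
  app : {X : Type} → S.obj (W.obj X) → B.obj (M.obj X)
  naturality : ∀ {X Y : Type} (h : X → Y) (u : S.obj (W.obj X)),
    app (S.map (W.cmap h) u) = B.map (M.mmap h) (app u)

/-- Monotonicity of a biGSOS specification. -/
def BiGSOS.Monotone {S : SetFunctor} {B : OrderedFunctor} {W : Cofree B.toSetFunctor}
    {M : FreeMonad S} (ρ : BiGSOS S B W M) : Prop :=
  ∀ (X : Type) (u v : S.obj (W.obj X)),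
    S.relLift (cofreeSim B W X) u v → B.le (ρ.app u) (ρ.app v)

/-- The map `φ(f) = Bμ_∅ ∘ ρ_{Σ*∅} ∘ Σ(f^∞) ∘ ι_∅⁻¹` on coalgebras `Σ*∅ → BΣ*∅`. -/
def phi0 {S : SetFunctor} {B : OrderedFunctor} {W : Cofree B.toSetFunctor}
    {M : FreeMonad S} (ρ : BiGSOS S B W M)
    (f : M.obj Empty → B.obj (M.obj Empty)) : M.obj Empty → B.obj (M.obj Empty) :=
  fun t => Sum.elim (fun s => B.map M.μ (ρ.app (S.map (W.coext f) s)))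
    (fun x => x.elim) (M.dest t)

/-- The map `φ_c(f) = [Bμ_X ∘ ρ_{Σ*X} ∘ Σ(f^∞), Bη_X ∘ c] ∘ [ι_X, η_X]⁻¹` on
coalgebras `Σ*X → BΣ*X`, for a coalgebra `c : X → BX`. -/
def phiC {S : SetFunctor} {B : OrderedFunctor} {W : Cofree B.toSetFunctor}
    {M : FreeMonad S} (ρ : BiGSOS S B W M) {X : Type} (c : X → B.obj X)
    (f : M.obj X → B.obj (M.obj X)) : M.obj X → B.obj (M.obj X) :=
  fun t => Sum.elim (fun s => B.map M.μ (ρ.app (S.map (W.coext f) s)))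
    (fun x => B.map M.η (c x)) (M.dest t)

/-- A supported model of a biGSOS specification `ρ`. -/
def IsSupportedModel {S : SetFunctor} {B : OrderedFunctor} {W : Cofree B.toSetFunctor}
    {M : FreeMonad S} (ρ : BiGSOS S B W M)
    (f : M.obj Empty → B.obj (M.obj Empty)) : Prop :=
  ∀ t : S.obj (M.obj Empty), f (M.ι t) = B.map M.μ (ρ.app (S.map (W.coext f) t))

/-- The least supported model of `ρ` (least w.r.t. the pointwise order). -/
def IsLeastSupportedModel {S : SetFunctor} {B : OrderedFunctor} {W : Cofree B.toSetFunctor}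
    {M : FreeMonad S} (ρ : BiGSOS S B W M)
    (m : M.obj Empty → B.obj (M.obj Empty)) : Prop :=
  IsSupportedModel ρ m ∧ ∀ f, IsSupportedModel ρ f → ∀ t, B.le (m t) (f t)

/-- `u` is a least upper bound of `D` with respect to the relation `le`. -/
def IsLubRel {α : Type} (le : α → α → Prop) (D : Set α) (u : α) : Prop :=
  (∀ a ∈ D, le a u) ∧ ∀ v, (∀ a ∈ D, le a v) → le u v

/-- `le` makes `α` into a pointed DCPO: a partial order with a least element in
which every nonempty directed subset has a least upper bound. -/
def IsPointedDCPO {α : Type} (le : α → α → Prop) : Prop :=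
  (∀ a b : α, le a b → le b a → a = b) ∧
  (∃ bot : α, ∀ a, le bot a) ∧
  ∀ D : Set α, D.Nonempty → DirectedOn le D → ∃ u, IsLubRel le D u

/-- A `DCPO_⊥`-ordered functor: each `BX` is a pointed DCPO and each `Bf` is continuous. -/
structure DCPOOrderedFunctor extends OrderedFunctor where
  dcpo : ∀ X : Type, IsPointedDCPO (fun a b : obj X => le a b)
  map_cont : ∀ {X Y : Type} (f : X → Y) (D : Set (obj X)) (u : obj X),
    D.Nonempty → DirectedOn (fun a b => le a b) D →
    IsLubRel (fun a b => le a b) D u →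
    IsLubRel (fun a b => le a b) (map f '' D) (map f u)

/-- Preservation of weak pullbacks by a `Set`-functor. -/
def SetFunctor.PreservesWeakPullbacks (B : SetFunctor) : Prop :=
  ∀ {X Y Z : Type} (f : X → Z) (g : Y → Z) (u : B.obj X) (v : B.obj Y),
    B.map f u = B.map g v →
    ∃ d : B.obj {p : X × Y // f p.1 = g p.2},
      B.map (fun p => p.1.1) d = u ∧ B.map (fun p => p.1.2) d = v

/-- `m` is the least fixed point of `φ` on coalgebras with carrier `C`. -/
def IsLfpCoalg (B : OrderedFunctor) {C : Type}
    (φ : (C → B.obj C) → (C → B.obj C)) (m : C → B.obj C) : Prop :=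
  φ m = m ∧ ∀ f, φ f = f → ∀ t, B.le (m t) (f t)

/-- A distributive law `λ : Σ*B^∞ ⇒ B^∞Σ*` of the free monad `Σ*` over the cofree
comonad `B^∞`. -/
structure DistLaw (S B : SetFunctor) (W : Cofree B) (M : FreeMonad S) where
  app : {X : Type} → M.obj (W.obj X) → W.obj (M.obj X)
  naturality : ∀ {X Y : Type} (h : X → Y) (t : M.obj (W.obj X)),
    app (M.mmap (W.cmap h) t) = W.cmap (M.mmap h) (app t)
  unit : ∀ {X : Type} (w : W.obj X), app (M.η w) = W.cmap M.η w
  counit : ∀ {X : Type} (t : M.obj (W.obj X)), W.ε (app t) = M.mmap W.ε t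
  mult : ∀ {X : Type} (t : M.obj (M.obj (W.obj X))),
    app (M.μ t) = W.cmap M.μ (app (M.mmap app t))
  comult : ∀ {X : Type} (t : M.obj (W.obj X)),
    W.δ (app t) = W.cmap app (app (M.mmap W.δ t))

theorem statement3 (B : OrderedFunctor) (hwp : B.toSetFunctor.PreservesWeakPullbacks)
    (W : Cofree B.toSetFunctor) (X Y : Type)
    (f : X → B.obj X) (g : Y → B.obj Y) (h : X → Y) :
    ((∀ x, B.le (B.map h (f x)) (g (h x))) →
      ∀ x, cofreeSim B W Y (W.cmap h (W.coext f x)) (W.coext g (h x))) ∧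
    ((∀ x, B.le (g (h x)) (B.map h (f x))) →
      ∀ x, cofreeSim B W Y (W.coext g (h x)) (W.cmap h (W.coext f x))) := by

  classical
  -- abbreviation and basic computations
  set k : X → W.obj Y := fun x => W.cmap h (W.coext f x) with hk
  have hθcoext : ∀ (x : X), W.θ (W.coext f x) = B.map (W.coext f) (f x) := fun x =>
    W.θ_ext f id x
  have hθcoextg : ∀ (y : Y), W.θ (W.coext g y) = B.map (W.coext g) (g y) := fun y =>
    W.θ_ext g id y
  have hεcoextg : ∀ (y : Y), W.ε (W.coext g y) = y := fun y => W.ε_ext g id y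
  have hθk : ∀ x, W.θ (k x) = B.map k (f x) := by
    intro x
    have h1 : W.θ (W.cmap h (W.coext f x)) = B.map (W.cmap h) (W.θ (W.coext f x)) :=
      W.θ_ext W.θ (h ∘ W.ε) (W.coext f x)
    have h2 := hθcoext x
    have h3 : B.map (W.cmap h) (B.map (W.coext f) (f x)) = B.map k (f x) := by
      have := congrFun (B.map_comp (W.coext f) (W.cmap h)) (f x)
      exact this.symm
    calc W.θ (k x) = B.map (W.cmap h) (W.θ (W.coext f x)) := h1
      _ = B.map (W.cmap h) (B.map (W.coext f) (f x)) := by rw [h2]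
      _ = B.map k (f x) := h3
  have hεk : ∀ x, W.ε (k x) = h x := by
    intro x
    have h1 : W.ε (W.cmap h (W.coext f x)) = (h ∘ W.ε) (W.coext f x) :=
      W.ε_ext W.θ (h ∘ W.ε) (W.coext f x)
    have h2 : W.ε (W.coext f x) = x := W.ε_ext f id x
    simp only [hk]
    rw [h1]; simp [Function.comp, h2]
  have hcomp : ∀ (q : X → W.obj Y) (b : B.obj X)
      (s : X → {p : W.obj Y × W.obj Y // ∃ x, p.1 = q x ∧ p.2 = W.coext g (h x)}),
      True := fun _ _ _ => trivial
  constructor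
  · intro hle x
    refine ⟨fun a b => ∃ x, a = k x ∧ b = W.coext g (h x), ?_, ⟨x, rfl, rfl⟩⟩
    rintro a b ⟨x, rfl, rfl⟩
    -- construct the lax relation lifting witness
    refine ⟨(W.θ (k x), W.ε (k x)), (B.map (fun x => W.coext g (h x)) (f x), h x), ?_, ?_, ?_⟩
    · exact ⟨B.le_refl _, rfl⟩
    · -- canonical relation lifting
      refine ⟨(B.map (fun x : X => (⟨(k x, W.coext g (h x)), ⟨x, rfl, rfl⟩⟩ :
          {p : W.obj Y × W.obj Y // ∃ x, p.1 = k x ∧ p.2 = W.coext g (h x)})) (f x),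
          W.ε (k x)), ?_, ?_⟩
      · show (B.map _ (B.map _ (f x)), W.ε (k x)) = (W.θ (k x), W.ε (k x))
        have := congrFun (B.map_comp (fun x : X => (⟨(k x, W.coext g (h x)), ⟨x, rfl, rfl⟩⟩ :
          {p : W.obj Y × W.obj Y // ∃ x, p.1 = k x ∧ p.2 = W.coext g (h x)}))
          (fun p => p.1.1)) (f x)
        simp only [Function.comp] at this
        rw [hθk x, ← this]
        rfl
      · show (B.map _ (B.map _ (f x)), W.ε (k x)) = (B.map (fun x => W.coext g (h x)) (f x), h x)
        have := congrFun (B.map_comp (fun x : X => (⟨(k x, W.coext g (h x)), ⟨x, rfl, rfl⟩⟩ :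
          {p : W.obj Y × W.obj Y // ∃ x, p.1 = k x ∧ p.2 = W.coext g (h x)}))
          (fun p => p.1.2)) (f x)
        simp only [Function.comp] at this
        rw [← this, hεk x]
        rfl
    · constructor
      · show B.le (B.map (fun x => W.coext g (h x)) (f x)) (W.θ (W.coext g (h x)))
        rw [hθcoextg (h x)]
        have e1 : B.map (fun x => W.coext g (h x)) (f x)
            = B.map (W.coext g) (B.map h (f x)) := by
          have := congrFun (B.map_comp h (W.coext g)) (f x)
          exact this
        rw [e1]
        exact B.map_mono (W.coext g) (hle x)
      · show h x = W.ε (W.coext g (h x))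
        rw [hεcoextg (h x)]
  · intro hle x
    refine ⟨fun a b => ∃ x, a = W.coext g (h x) ∧ b = k x, ?_, ⟨x, rfl, rfl⟩⟩
    rintro a b ⟨x, rfl, rfl⟩
    refine ⟨(B.map (fun x => W.coext g (h x)) (f x), h x), (W.θ (k x), W.ε (k x)), ?_, ?_, ?_⟩
    · constructor
      · show B.le (W.θ (W.coext g (h x))) (B.map (fun x => W.coext g (h x)) (f x))
        rw [hθcoextg (h x)]
        have e1 : B.map (fun x => W.coext g (h x)) (f x)
            = B.map (W.coext g) (B.map h (f x)) := by
          have := congrFun (B.map_comp h (W.coext g)) (f x)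
          exact this
        rw [e1]
        exact B.map_mono (W.coext g) (hle x)
      · show W.ε (W.coext g (h x)) = h x
        exact hεcoextg (h x)
    · refine ⟨(B.map (fun x : X => (⟨(W.coext g (h x), k x), ⟨x, rfl, rfl⟩⟩ :
          {p : W.obj Y × W.obj Y // ∃ x, p.1 = W.coext g (h x) ∧ p.2 = k x})) (f x),
          h x), ?_, ?_⟩
      · show (B.map _ (B.map _ (f x)), h x) = (B.map (fun x => W.coext g (h x)) (f x), h x)
        have := congrFun (B.map_comp (fun x : X => (⟨(W.coext g (h x), k x), ⟨x, rfl, rfl⟩⟩ :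
          {p : W.obj Y × W.obj Y // ∃ x, p.1 = W.coext g (h x) ∧ p.2 = k x}))
          (fun p => p.1.1)) (f x)
        simp only [Function.comp] at this
        rw [← this]
        rfl
      · show (B.map _ (B.map _ (f x)), h x) = (W.θ (k x), W.ε (k x))
        have := congrFun (B.map_comp (fun x : X => (⟨(W.coext g (h x), k x), ⟨x, rfl, rfl⟩⟩ :
          {p : W.obj Y × W.obj Y // ∃ x, p.1 = W.coext g (h x) ∧ p.2 = k x}))
          (fun p => p.1.2)) (f x)
        simp only [Function.comp] at this
        rw [← this, hθk x, hεk x]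
        rfl
    · exact ⟨B.le_refl _, rfl⟩
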